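/- Selective data propagation as an instance of well-propagation: Under the hypotheses of the abstract well-propagation theorem, let 𝔇 = {confined, open}, (𝒞, 𝒪) a pair of tagging functions, L̃ ⊆ L a sub-system, and 𝔓(d,ℓ₁,ℓ₂) ⇔ (d = confined → ℓ₁ ∈ L̃ ∧ ℓ₂ ∈ L̃). If the analysis is valid for N and whenever (ℓ₁,⟨v̂₁,…,v̂_r⟩) ∈ κ(ℓ₂) with 𝒪(v̂ᵢ) = confined for some i we have ℓ₁ ∈ L̃ and ℓ₂ ∈ L̃, then no reduct of N sends a message containing a confined value (per 𝒞 on its abstract tree) between nodes not both in L̃. -/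

import Mathlib

inductive CTag where
  | confined
  | open_
deriving DecidableEq

/-- Selective data propagation as an instance of well-propagation: with tags
`{confined, open}`, a sub-system `Lsub` and policy `d = confined → ℓ₁ ∈ Lsub ∧ ℓ₂ ∈ Lsub`,
if the analysis is valid for `N` and every confined abstract value occurring in a
`κ` message travels between nodes of `Lsub`, then no reduct of `N` sends a message
containing a confined value between nodes not both in `Lsub`. -/
theorem selective_data_propagation
    {Sys L V T G : Type*}
    (Step : Sys → Sys → Prop)
    (Comm : Sys → L → L → List V → Sys → Prop)
    (tree : V → T)
    (Lang : G → Set T)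
    (κ : L → Set (L × List (Set G)))
    (Valid : Sys → Prop)
    (hSR : ∀ N N', Valid N → Step N N' → Valid N')
    (hComm : ∀ N ℓ₁ ℓ₂ (vs : List V) N', Valid N → Comm N ℓ₁ ℓ₂ vs N' →
      ∃ avs : List (Set G), (ℓ₁, avs) ∈ κ ℓ₂ ∧ avs.length = vs.length ∧
        ∀ i (hv : i < vs.length) (ha : i < avs.length),
          ∃ Gh ∈ avs.get ⟨i, ha⟩, tree (vs.get ⟨i, hv⟩) ∈ Lang Gh)
    -- tagging pair (𝒞 on trees, 𝒪 on abstract values)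
    (C : T → CTag) (O : Set G → CTag)
    (hTag : ∀ av : Set G, ∀ g ∈ av, ∀ t ∈ Lang g, C t = O av)
    (Lsub : Set L)
    (N : Sys) (hValid : Valid N)
    (hκ : ∀ ℓ₁ ℓ₂ (avs : List (Set G)), (ℓ₁, avs) ∈ κ ℓ₂ →
      (∃ av ∈ avs, O av = CTag.confined) → ℓ₁ ∈ Lsub ∧ ℓ₂ ∈ Lsub) :
    ∀ N', Relation.ReflTransGen Step N N' →
      ∀ ℓ₁ ℓ₂ (vs : List V) N'', Comm N' ℓ₁ ℓ₂ vs N'' →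
        ∀ i (hv : i < vs.length),
          C (tree (vs.get ⟨i, hv⟩)) = CTag.confined → ℓ₁ ∈ Lsub ∧ ℓ₂ ∈ Lsub := by
  intro N' hsteps
  have hValid' : Valid N' := by
    induction hsteps with
    | refl => exact hValid
    | tail _ h ih => exact hSR _ _ ih h
  intro ℓ₁ ℓ₂ vs N'' hcomm i hv hconf
  obtain ⟨avs, hmem, hlen, hget⟩ := hComm _ _ _ _ _ hValid' hcomm
  have ha : i < avs.length := hlen ▸ hv
  obtain ⟨Gh, hGh, hLang⟩ := hget i hv ha
  refine hκ _ _ _ hmem ⟨avs.get ⟨i, ha⟩, List.get_mem _ _, ?_⟩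
  rw [← hTag _ _ hGh _ hLang, hconf]
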